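/- In the deterministic single-commodity problem with time-invariant prices π⁺ > π⁻, an optimal schedule never purchases power in interval t if the remaining demand y_t satisfies y_t ≤ (T − t)·v̄ + min(v̄, g_t): i.e., there exists an optimal feasible schedule with v_t ≤ min(v̄, g_t) whenever y_t − min(v̄, g_t) ≤ (T − t)·v̄. -/

import Mathlib

noncomputable def nemP (pb ps : ℝ) (z : ℝ) : ℝ := pb * max z 0 - ps * max (-z) 0

/-- Feasible schedules: serve total demand `y₁` in `T` intervals, `0 ≤ v_t ≤ v̄`. -/
def FeasSched (T : ℕ) (vbar y₁ : ℝ) (v : ℕ → ℝ) : Prop :=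
  (∀ t < T, 0 ≤ v t ∧ v t ≤ vbar) ∧ ∑ t ∈ Finset.range T, v t = y₁

/-- Remaining demand at the start of interval `t` (0-indexed). -/
noncomputable def remDemand (y₁ : ℝ) (v : ℕ → ℝ) (t : ℕ) : ℝ :=
  y₁ - ∑ s ∈ Finset.range t, v s

/-- Remaining demand of the greedy procrastinating schedule. -/
noncomputable def gsy (vbar y₁ : ℝ) (g : ℕ → ℝ) (T : ℕ) : ℕ → ℝ
  | 0 => y₁
  | t + 1 => gsy vbar y₁ g T t -
      max (min (min vbar (g t)) (gsy vbar y₁ g T t))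
          (gsy vbar y₁ g T t - ((T - t - 1 : ℕ) : ℝ) * vbar)

/-- The greedy procrastinating schedule. -/
noncomputable def gsv (vbar y₁ : ℝ) (g : ℕ → ℝ) (T : ℕ) (t : ℕ) : ℝ :=
  max (min (min vbar (g t)) (gsy vbar y₁ g T t))
      (gsy vbar y₁ g T t - ((T - t - 1 : ℕ) : ℝ) * vbar)

lemma nemP_decomp (pb ps z : ℝ) : nemP pb ps z = ps * z + (pb - ps) * max z 0 := by
  have h : max (-z) 0 = max z 0 - z := by
    rcases le_total z 0 with h | h
    · rw [max_eq_left (by linarith), max_eq_right h]; ring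
    · rw [max_eq_right (by linarith), max_eq_left h]; ring
  rw [nemP, h]; ring

/-- there exists an optimal (payment-minimizing) feasible schedule that
never purchases power in interval `t` whenever
`y_t − min(v̄, g_t) ≤ (T − t − 1)·v̄` (remaining laxity suffices), i.e. `v_t ≤ min(v̄, g_t)`
in such intervals. -/
theorem exists_optimal_procrastinating_schedule
    (pb ps vbar y₁ : ℝ) (T : ℕ) (hps : 0 ≤ ps) (hp : ps < pb) (hv : 0 < vbar)
    (hy₁ : 0 ≤ y₁) (hy₂ : y₁ ≤ (T : ℝ) * vbar)
    (g : ℕ → ℝ) (hg : ∀ t, 0 ≤ g t) :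
    ∃ v : ℕ → ℝ, FeasSched T vbar y₁ v ∧
      (∀ w : ℕ → ℝ, FeasSched T vbar y₁ w →
        ∑ t ∈ Finset.range T, nemP pb ps (v t - g t) ≤
        ∑ t ∈ Finset.range T, nemP pb ps (w t - g t)) ∧
      (∀ t < T, remDemand y₁ v t - min vbar (g t) ≤ ((T - t - 1 : ℕ) : ℝ) * vbar →
        v t ≤ min vbar (g t)) := by
  set m : ℕ → ℝ := fun t => min vbar (g t) with hm
  set Y : ℕ → ℝ := gsy vbar y₁ g T with hY
  set v : ℕ → ℝ := gsv vbar y₁ g T with hvdef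
  have hm0 : ∀ t, 0 ≤ m t := fun t => le_min hv.le (hg t)
  have hmv : ∀ t, m t ≤ vbar := fun t => min_le_left _ _
  have hYsucc : ∀ t, Y (t + 1) = Y t - v t := fun t => rfl
  have hvt : ∀ t, v t = max (min (m t) (Y t)) (Y t - ((T - t - 1 : ℕ) : ℝ) * vbar) :=
    fun t => rfl
  -- invariant
  have hinv : ∀ t, t ≤ T → 0 ≤ Y t ∧ Y t ≤ ((T - t : ℕ) : ℝ) * vbar := by
    intro t
    induction t with
    | zero => intro _; exact ⟨hy₁, by simpa [hY, gsy] using hy₂⟩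
    | succ t ih =>
      intro ht
      obtain ⟨h0, h1⟩ := ih (by omega)
      have hD : (0 : ℝ) ≤ ((T - t - 1 : ℕ) : ℝ) * vbar :=
        mul_nonneg (Nat.cast_nonneg _) hv.le
      have hvle : v t ≤ Y t := by
        rw [hvt]
        exact max_le (min_le_right _ _) (by linarith)
      have hvge : Y t - ((T - t - 1 : ℕ) : ℝ) * vbar ≤ v t := by
        rw [hvt]; exact le_max_right _ _
      have hvnn : 0 ≤ v t := by
        rw [hvt]
        exact le_trans (le_min (hm0 t) h0) (le_max_left _ _)
      have hcast : ((T - t - 1 : ℕ) : ℝ) = ((T - (t + 1) : ℕ) : ℝ) := by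
        have h' : T - t - 1 = T - (t + 1) := by omega
        rw [h']
      constructor
      · rw [hYsucc]; linarith
      · rw [hYsucc]; rw [hcast] at hvge; linarith
  have hTT : Y T = 0 := by
    obtain ⟨h0, h1⟩ := hinv T le_rfl
    have : ((T - T : ℕ) : ℝ) = 0 := by norm_num
    rw [this, zero_mul] at h1
    linarith
  have hvbounds : ∀ t < T, 0 ≤ v t ∧ v t ≤ vbar := by
    intro t ht
    obtain ⟨h0, h1⟩ := hinv t ht.le
    constructor
    · rw [hvt]; exact le_trans (le_min (hm0 t) h0) (le_max_left _ _)
    · rw [hvt]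
      refine max_le (le_trans (min_le_left _ _) (hmv t)) ?_
      have hcast : ((T - t : ℕ) : ℝ) = ((T - t - 1 : ℕ) : ℝ) + 1 := by
        have : (T - t : ℕ) = (T - t - 1) + 1 := by omega
        rw [this]; push_cast; ring
      rw [hcast] at h1
      nlinarith
  have hvle : ∀ t, v t ≤ Y t := by
    intro t
    have hD : (0 : ℝ) ≤ ((T - t - 1 : ℕ) : ℝ) * vbar :=
      mul_nonneg (Nat.cast_nonneg _) hv.le
    rw [hvt]
    exact max_le (min_le_right _ _) (by linarith)
  have hsum : ∀ t, ∑ s ∈ Finset.range t, v s = y₁ - Y t := by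
    intro t
    induction t with
    | zero => simp [hY, gsy]
    | succ t ih => rw [Finset.sum_range_succ, ih, hYsucc]; ring
  have hfeas : FeasSched T vbar y₁ v := ⟨hvbounds, by rw [hsum T, hTT]; ring⟩
  have hrem : ∀ t, remDemand y₁ v t = Y t := by
    intro t; rw [remDemand, hsum]; ring
  -- key identity: suffix sums of excesses
  have hkey : ∀ k, k ≤ T →
      ∑ s ∈ Finset.Ico (T - k) T, max (v s - m s) 0 =
        max (Y (T - k) - ∑ s ∈ Finset.Ico (T - k) T, m s) 0 := by
    intro k
    induction k with
    | zero =>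
      intro _
      simp [hTT]
    | succ k ih =>
      intro hk
      have ht : T - (k + 1) < T := by omega
      have ht1 : T - (k + 1) + 1 = T - k := by omega
      set t := T - (k + 1) with htdef
      have hIH := ih (by omega)
      rw [← ht1] at hIH
      have hbot : ∀ f : ℕ → ℝ, ∑ s ∈ Finset.Ico t T, f s = f t + ∑ s ∈ Finset.Ico (t + 1) T, f s :=
        fun f => Finset.sum_eq_sum_Ico_succ_bot ht f
      rw [hbot, hbot, hIH]
      set M' : ℝ := ∑ s ∈ Finset.Ico (t + 1) T, m s with hM'
      have hM'nn : 0 ≤ M' := Finset.sum_nonneg fun s _ => hm0 s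
      have hM'le : M' ≤ ((T - t - 1 : ℕ) : ℝ) * vbar := by
        have hcard : (Finset.Ico (t + 1) T).card = T - t - 1 := by
          rw [Nat.card_Ico]; omega
        calc M' ≤ (Finset.Ico (t + 1) T).card • vbar :=
              Finset.sum_le_card_nsmul _ _ _ fun s _ => hmv s
          _ = ((T - t - 1 : ℕ) : ℝ) * vbar := by
              rw [hcard, nsmul_eq_mul]
      have hYt1 : Y (t + 1) = Y t - v t := hYsucc t
      rcases le_or_gt (v t) (m t) with hcase | hcase
      · rw [max_eq_right (by linarith)]
        rcases le_or_gt (Y (t + 1)) M' with hc2 | hc2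
        · rw [max_eq_right (by linarith), max_eq_right (by nlinarith [hYt1]), zero_add]
        · -- Y(t+1) > M' ≥ 0, so v t < Y t is impossible unless v t = m t
          have hvm : v t = m t := by
            by_contra hne
            have hlt : v t < m t := lt_of_le_of_ne hcase hne
            have hminY : min (m t) (Y t) = Y t := by
              rcases le_total (m t) (Y t) with h | h
              · exfalso
                have : m t ≤ v t := by
                  rw [hvt]
                  exact le_trans (le_of_eq (min_eq_left h).symm) (le_max_left _ _)
                linarith
              · exact min_eq_right h
            have : Y t ≤ v t := by
              rw [hvt, hminY]; exact le_max_left _ _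
            have hY10 : Y (t + 1) ≤ 0 := by rw [hYt1]; linarith
            linarith
          rw [zero_add, hYt1, hvm, sub_sub]
      · -- v t > m t : then v t = Y t - (T-t-1)*vbar
        have hveq : v t = Y t - ((T - t - 1 : ℕ) : ℝ) * vbar := by
          rw [hvt]
          have : min (m t) (Y t) ≤ m t := min_le_left _ _
          rw [hvt] at hcase
          rcases max_cases (min (m t) (Y t)) (Y t - ((T - t - 1 : ℕ) : ℝ) * vbar) with
            ⟨heq, hge⟩ | ⟨heq, _⟩
          · exfalso; rw [heq] at hcase; linarith
          · exact heq
        have hY1 : Y (t + 1) = ((T - t - 1 : ℕ) : ℝ) * vbar := by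
          rw [hYt1, hveq]; ring
        have h2 : M' ≤ Y (t + 1) := by rw [hY1]; exact hM'le
        rw [max_eq_left (by linarith), max_eq_left (by linarith),
          max_eq_left (by linarith)]
        linarith [hYt1]
  have hS : ∑ s ∈ Finset.range T, max (v s - m s) 0 =
      max (y₁ - ∑ s ∈ Finset.range T, m s) 0 := by
    have := hkey T le_rfl
    simp only [Nat.sub_self] at this
    rw [Finset.range_eq_Ico]
    have hY0 : Y 0 = y₁ := rfl
    rw [this, hY0]
  -- pointwise: for x ≤ vbar, max (x - g t) 0 = max (x - m t) 0
  have hpt : ∀ t, ∀ x : ℝ, x ≤ vbar → max (x - g t) 0 = max (x - m t) 0 := by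
    intro t x hx
    rcases le_total (g t) vbar with h | h
    · rw [hm]; simp [min_eq_right h]
    · have hmt : m t = vbar := by rw [hm]; simp [min_eq_left h]
      rw [hmt, max_eq_right (by linarith), max_eq_right (by linarith)]
  refine ⟨v, hfeas, ?_, ?_⟩
  · -- optimality
    intro w hw
    obtain ⟨hwb, hwsum⟩ := hw
    have hcost : ∀ u : ℕ → ℝ, (∑ t ∈ Finset.range T, u t = y₁) →
        ∑ t ∈ Finset.range T, nemP pb ps (u t - g t) =
          ps * (y₁ - ∑ t ∈ Finset.range T, g t) +
            (pb - ps) * ∑ t ∈ Finset.range T, max (u t - g t) 0 := by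
      intro u hu
      simp only [nemP_decomp]
      rw [Finset.sum_add_distrib, ← Finset.mul_sum, ← Finset.mul_sum,
        Finset.sum_sub_distrib, hu]
    rw [hcost v hfeas.2, hcost w hwsum]
    have hSv : ∑ t ∈ Finset.range T, max (v t - g t) 0 =
        max (y₁ - ∑ s ∈ Finset.range T, m s) 0 := by
      rw [← hS]
      apply Finset.sum_congr rfl
      intro t ht
      exact hpt t (v t) ((hvbounds t (Finset.mem_range.mp ht)).2)
    have hSw : max (y₁ - ∑ s ∈ Finset.range T, m s) 0 ≤
        ∑ t ∈ Finset.range T, max (w t - g t) 0 := by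
      apply max_le
      · rw [← hwsum, ← Finset.sum_sub_distrib]
        apply Finset.sum_le_sum
        intro t ht
        have hwt := hwb t (Finset.mem_range.mp ht)
        calc w t - m t ≤ max (w t - m t) 0 := le_max_left _ _
          _ = max (w t - g t) 0 := (hpt t (w t) hwt.2).symm
      · exact Finset.sum_nonneg fun t _ => le_max_right _ _
    rw [hSv]
    have := mul_le_mul_of_nonneg_left hSw (by linarith : (0:ℝ) ≤ pb - ps)
    linarith
  · -- procrastination
    intro t ht hlax
    rw [hrem] at hlax
    rw [hvt]
    exact max_le (min_le_left _ _) (by linarith)
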